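/- Let f(v) denote the weight of the minimum-weight tree in a weighted undirected graph that spans a set of k terminal vertices. The greedy procedure that repeatedly attaches the nearest uncovered terminal to the current tree via a shortest path yields a tree of weight at most (2 − 2/k) times f(v), assuming k ≥ 2 and nonnegative edge weights. -/

import Mathlib

open scoped Classical

/-- Weight of a walk: sum of the weights of its edges. -/
noncomputable def walkWeight {V : Type*} {G : SimpleGraph V} (w : Sym2 V → ℝ)
    {a b : V} (p : G.Walk a b) : ℝ :=
  (p.edges.map w).sum

/-- Weight of a subgraph: sum of the weights of its edges. -/
noncomputable def subgraphWeight {V : Type*} [Fintype V] [DecidableEq V]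
    {G : SimpleGraph V} (w : Sym2 V → ℝ) (H : G.Subgraph) : ℝ :=
  ∑ e ∈ Finset.univ.filter (fun e : Sym2 V => e ∈ H.edgeSet), w e

namespace TMaux

open SimpleGraph

variable {V : Type*} {G : SimpleGraph V} {w : Sym2 V → ℝ}

@[simp] lemma walkWeight_nil {a : V} : walkWeight w (Walk.nil : G.Walk a a) = 0 := by
  simp [walkWeight]

lemma walkWeight_cons {a b c : V} (h : G.Adj a b) (p : G.Walk b c) :
    walkWeight w (Walk.cons h p) = w s(a, b) + walkWeight w p := by
  simp [walkWeight]

lemma walkWeight_append {a b c : V} (p : G.Walk a b) (q : G.Walk b c) :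
    walkWeight w (p.append q) = walkWeight w p + walkWeight w q := by
  simp [walkWeight, Walk.edges_append]

lemma walkWeight_reverse {a b : V} (p : G.Walk a b) :
    walkWeight w p.reverse = walkWeight w p := by
  simp [walkWeight, Walk.edges_reverse, List.sum_reverse]

lemma walkWeight_nonneg (hw : ∀ e, 0 ≤ w e) {a b : V} (p : G.Walk a b) :
    0 ≤ walkWeight w p := by
  apply List.sum_nonneg
  intro x hx
  obtain ⟨e, _, rfl⟩ := List.mem_map.mp hx
  exact hw e

/-- reachability using only edges from `F` -/
def reach (G : SimpleGraph V) (F : Finset (Sym2 V)) (x y : V) : Prop :=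
  ∃ p : G.Walk x y, ∀ e ∈ p.edges, e ∈ F

lemma reach.refl (F : Finset (Sym2 V)) (x : V) : reach G F x x :=
  ⟨Walk.nil, by simp⟩

lemma reach.symm {F : Finset (Sym2 V)} {x y : V} (h : reach G F x y) : reach G F y x := by
  obtain ⟨p, hp⟩ := h
  exact ⟨p.reverse, by simpa [Walk.edges_reverse] using hp⟩

lemma reach.trans {F : Finset (Sym2 V)} {x y z : V} (h : reach G F x y) (h' : reach G F y z) :
    reach G F x z := by
  obtain ⟨p, hp⟩ := h
  obtain ⟨q, hq⟩ := h'
  refine ⟨p.append q, ?_⟩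
  intro e he
  rw [Walk.edges_append, List.mem_append] at he
  exact he.elim (hp e) (hq e)

lemma reach.mono {F F' : Finset (Sym2 V)} (hFF : F ⊆ F') {x y : V} (h : reach G F x y) :
    reach G F' x y := by
  obtain ⟨p, hp⟩ := h
  exact ⟨p, fun e he => hFF (hp e he)⟩

end TMaux

namespace TMaux2
open SimpleGraph TMaux

variable {V : Type*} {G : SimpleGraph V} {w : Sym2 V → ℝ}

lemma reach_step {F : Finset (Sym2 V)} {a b x : V} (h : G.Adj a b) (he : s(a, b) ∈ F)
    (hr : reach G F b x) : reach G F a x :=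
  reach.trans ⟨Walk.cons h Walk.nil, by simpa using he⟩ hr

lemma eq_of_reach_empty {a x : V} (h : reach G (∅ : Finset (Sym2 V)) a x) : a = x := by
  obtain ⟨p, hp⟩ := h
  cases p with
  | nil => rfl
  | cons h q =>
    have := hp _ (by rw [Walk.edges_cons]; exact List.mem_cons_self)
    simp at this

lemma reach_trichotomy {F : Finset (Sym2 V)} {e : Sym2 V} {u v : V} (he : e = s(u, v))
    {a x : V} (h : reach G F a x) :
    reach G (F.erase e) a x ∨ reach G (F.erase e) u x ∨ reach G (F.erase e) v x := by
  obtain ⟨p, hp⟩ := h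
  induction p with
  | nil => exact Or.inl (reach.refl _ _)
  | @cons a b x hadj q ih =>
    have hq : ∀ e' ∈ q.edges, e' ∈ F := fun e' h' => hp e' (by simp [Walk.edges_cons, h'])
    by_cases hab : s(a, b) = e
    · have hb : b = u ∨ b = v := by
        rw [he, Sym2.eq_iff] at hab
        rcases hab with ⟨_, rfl⟩ | ⟨rfl, rfl⟩
        · exact Or.inr rfl
        · exact Or.inl rfl
      rcases ih hq with h' | h' | h'
      · rcases hb with rfl | rfl
        · exact Or.inr (Or.inl h')
        · exact Or.inr (Or.inr h')
      · exact Or.inr (Or.inl h')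
      · exact Or.inr (Or.inr h')
    · have hmem : s(a, b) ∈ F.erase e :=
        Finset.mem_erase.mpr ⟨hab, hp _ (by simp [Walk.edges_cons])⟩
      rcases ih hq with h' | h' | h'
      · exact Or.inl (reach_step hadj hmem h')
      · exact Or.inr (Or.inl h')
      · exact Or.inr (Or.inr h')

lemma reach_of_detour {F : Finset (Sym2 V)} {e : Sym2 V} {u v : V} (he : e = s(u, v))
    (hd : reach G (F.erase e) u v) {a x : V} (h : reach G F a x) :
    reach G (F.erase e) a x := by
  obtain ⟨p, hp⟩ := h
  induction p with
  | nil => exact reach.refl _ _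
  | @cons a b x hadj q ih =>
    have hq : ∀ e' ∈ q.edges, e' ∈ F := fun e' h' => hp e' (by simp [Walk.edges_cons, h'])
    have ihb := ih hq
    by_cases hab : s(a, b) = e
    · rw [he, Sym2.eq_iff] at hab
      rcases hab with ⟨rfl, rfl⟩ | ⟨rfl, rfl⟩
      · exact hd.trans ihb
      · exact hd.symm.trans ihb
    · exact reach_step hadj (Finset.mem_erase.mpr ⟨hab, hp _ (by simp [Walk.edges_cons])⟩) ihb

lemma reach_erase_of_far {F : Finset (Sym2 V)} {e : Sym2 V} {u v : V} (he : e = s(u, v))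
    {a x : V} (h : reach G F a x)
    (hu : ¬ reach G (F.erase e) a u) (hv : ¬ reach G (F.erase e) a v) :
    reach G (F.erase e) a x := by
  obtain ⟨p, hp⟩ := h
  induction p with
  | nil => exact reach.refl _ _
  | @cons a b x hadj q ih =>
    have hq : ∀ e' ∈ q.edges, e' ∈ F := fun e' h' => hp e' (by simp [Walk.edges_cons, h'])
    by_cases hab : s(a, b) = e
    · exfalso
      rw [he, Sym2.eq_iff] at hab
      rcases hab with ⟨rfl, rfl⟩ | ⟨rfl, rfl⟩
      · exact hu (reach.refl _ _)
      · exact hv (reach.refl _ _)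
    · have hmem : s(a, b) ∈ F.erase e :=
        Finset.mem_erase.mpr ⟨hab, hp _ (by simp [Walk.edges_cons])⟩
      exact reach_step hadj hmem
        (ih (fun hbu => hu (reach_step hadj hmem hbu))
          (fun hbv => hv (reach_step hadj hmem hbv)) hq)

end TMaux2
section TourPart
open SimpleGraph TMaux TMaux2

variable {V : Type*} {G : SimpleGraph V} {w : Sym2 V → ℝ}

lemma reach_filter {F' : Finset (Sym2 V)} {u z x : V}
    (hz : reach G F' u z) (h : reach G F' z x) :
    reach G (F'.filter (fun f => ∃ y ∈ f, reach G F' u y)) z x := by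
  obtain ⟨p, hp⟩ := h
  induction p with
  | nil => exact reach.refl _ _
  | @cons a b x hadj q ih =>
    have hab : s(a, b) ∈ F' := hp _ (by simp [Walk.edges_cons])
    have hmem : s(a, b) ∈ F'.filter (fun f => ∃ y ∈ f, reach G F' u y) :=
      Finset.mem_filter.mpr ⟨hab, ⟨a, by simp, hz⟩⟩
    have hub : reach G F' u b := hz.trans ⟨Walk.cons hadj Walk.nil, by simpa using hab⟩
    exact reach_step hadj hmem
      (ih hub (fun e' h' => hp e' (by simp [Walk.edges_cons, h'])))

lemma tour_step (hw : ∀ e, 0 ≤ w e) {n : ℕ}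
    (ih : ∀ F₀ : Finset (Sym2 V), F₀.card ≤ n → (∀ e ∈ F₀, e ∈ G.edgeSet) → ∀ r : V,
      ∃ W : G.Walk r r, (∀ x, reach G F₀ r x → x ∈ W.support) ∧
        walkWeight w W ≤ 2 * ∑ e ∈ F₀, w e)
    {F : Finset (Sym2 V)} {u v r : V} (adj : G.Adj u v) (he : s(u, v) ∈ F)
    (hcard : F.card ≤ n + 1) (hFG : ∀ e ∈ F, e ∈ G.edgeSet)
    (hru : reach G (F.erase s(u, v)) r u) (hnuv : ¬ reach G (F.erase s(u, v)) u v) :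
    ∃ W : G.Walk r r, (∀ x, reach G F r x → x ∈ W.support) ∧
      walkWeight w W ≤ 2 * ∑ e ∈ F, w e := by
  set F' := F.erase s(u, v) with hF'def
  set Fu := F'.filter (fun f => ∃ y ∈ f, reach G F' u y) with hFudef
  set Fv := F'.filter (fun f => ∃ y ∈ f, reach G F' v y) with hFvdef
  have hF'card : F'.card = F.card - 1 := Finset.card_erase_of_mem he
  have hFposs : 1 ≤ F.card := Finset.card_pos.mpr ⟨_, he⟩
  have hucard : Fu.card ≤ n := by
    have h1 : Fu.card ≤ F'.card := Finset.card_le_card (Finset.filter_subset _ _)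
    omega
  have hvcard : Fv.card ≤ n := by
    have h1 : Fv.card ≤ F'.card := Finset.card_le_card (Finset.filter_subset _ _)
    omega
  have hF'G : ∀ f ∈ F', f ∈ G.edgeSet := fun f hf => hFG f (Finset.mem_erase.mp hf).2
  obtain ⟨W₁, hW₁c, hW₁w⟩ := ih Fu hucard (fun f hf => hF'G f (Finset.filter_subset _ _ hf)) r
  obtain ⟨W₂, hW₂c, hW₂w⟩ := ih Fv hvcard (fun f hf => hF'G f (Finset.filter_subset _ _ hf)) v
  have hu_supp : u ∈ W₁.support := hW₁c u (reach_filter hru.symm hru)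
  set A := W₁.takeUntil u hu_supp with hA
  set B := W₁.dropUntil u hu_supp with hB
  set detour : G.Walk u u :=
    Walk.cons adj (W₂.append (Walk.cons adj.symm Walk.nil)) with hdet
  refine ⟨A.append (detour.append B), ?_, ?_⟩
  · intro x hx
    have hmemW₁ : x ∈ W₁.support → x ∈ (A.append (detour.append B)).support := by
      intro hx₁
      have : x ∈ A.support ∨ x ∈ B.support := by
        rw [← Walk.mem_support_append_iff, Walk.take_spec]
        exact hx₁
      rw [Walk.mem_support_append_iff, Walk.mem_support_append_iff]
      tauto
    have hmemW₂ : x ∈ W₂.support → x ∈ (A.append (detour.append B)).support := by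
      intro hx₂
      rw [Walk.mem_support_append_iff, Walk.mem_support_append_iff]
      refine Or.inr (Or.inl ?_)
      rw [hdet, Walk.support_cons]
      exact List.mem_cons_of_mem _ ((Walk.mem_support_append_iff _ _).mpr (Or.inl hx₂))
    rcases reach_trichotomy rfl hx with h | h | h
    · exact hmemW₁ (hW₁c x (reach_filter hru.symm h))
    · exact hmemW₁ (hW₁c x (reach_filter hru.symm (hru.trans h)))
    · exact hmemW₂ (hW₂c x (reach_filter (reach.refl _ _) h))
  · have hsplit : walkWeight w A + walkWeight w B = walkWeight w W₁ := by
      rw [← walkWeight_append]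
      exact congrArg (walkWeight w) (W₁.take_spec hu_supp)
    have hvu : w s(v, u) = w s(u, v) := congrArg w Sym2.eq_swap
    have hdisj : Disjoint Fu Fv := by
      rw [Finset.disjoint_left]
      rintro f hfu hfv
      obtain ⟨hf, y, hy, huy⟩ := Finset.mem_filter.mp hfu
      obtain ⟨-, z, hz, hvz⟩ := Finset.mem_filter.mp hfv
      by_cases hyz : y = z
      · exact hnuv (huy.trans (hyz ▸ hvz).symm)
      · have hfyz : f = s(y, z) := (Sym2.mem_and_mem_iff hyz).mp ⟨hy, hz⟩
        have hadjyz : G.Adj y z := (G.mem_edgeSet).mp (by rw [← hfyz]; exact hF'G f hf)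
        have hryz : reach G F' y z := ⟨Walk.cons hadjyz Walk.nil, by simpa [hfyz] using hf⟩
        exact hnuv ((huy.trans hryz).trans hvz.symm)
    have hsum : ∑ f ∈ Fu, w f + ∑ f ∈ Fv, w f ≤ ∑ f ∈ F', w f := by
      rw [← Finset.sum_union hdisj]
      exact Finset.sum_le_sum_of_subset_of_nonneg
        (Finset.union_subset (Finset.filter_subset _ _) (Finset.filter_subset _ _))
        (fun i _ _ => hw i)
    have hFsum : ∑ f ∈ F', w f + w s(u, v) = ∑ f ∈ F, w f := Finset.sum_erase_add _ _ he
    have hcalc : walkWeight w (A.append (detour.append B))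
        = walkWeight w W₁ + walkWeight w W₂ + 2 * w s(u, v) := by
      rw [walkWeight_append, walkWeight_append, hdet, walkWeight_cons, walkWeight_append,
        walkWeight_cons, walkWeight_nil, hvu, ← hsplit]
      ring
    rw [hcalc]
    linarith
end TourPart
section TourMain
open SimpleGraph TMaux TMaux2

variable {V : Type*} {G : SimpleGraph V} {w : Sym2 V → ℝ}

lemma tour (hw : ∀ e, 0 ≤ w e) :
    ∀ (n : ℕ) (F : Finset (Sym2 V)), F.card ≤ n → (∀ e ∈ F, e ∈ G.edgeSet) → ∀ r : V,
      ∃ W : G.Walk r r, (∀ x, reach G F r x → x ∈ W.support) ∧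
        walkWeight w W ≤ 2 * ∑ e ∈ F, w e := by
  intro n
  induction n with
  | zero =>
    intro F hcard _ r
    have hF : F = ∅ := Finset.card_eq_zero.mp (Nat.le_zero.mp hcard)
    subst hF
    exact ⟨Walk.nil, fun x hx => by rw [← eq_of_reach_empty hx]; simp, by simp⟩
  | succ n ih =>
    intro F hcard hFG r
    rcases F.eq_empty_or_nonempty with rfl | ⟨e, he⟩
    · exact ⟨Walk.nil, fun x hx => by rw [← eq_of_reach_empty hx]; simp, by simp⟩
    · obtain ⟨u, v, rfl⟩ : ∃ u v, e = s(u, v) := Sym2.ind (fun a b => ⟨a, b, rfl⟩) e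
      have adj : G.Adj u v := (G.mem_edgeSet).mp (hFG _ he)
      by_cases h1 : reach G (F.erase s(u, v)) u v
      · obtain ⟨W, hWc, hWw⟩ := ih (F.erase s(u, v))
          (by have := Finset.card_erase_of_mem he
              have := Finset.card_pos.mpr ⟨_, he⟩
              omega)
          (fun f hf => hFG f (Finset.mem_erase.mp hf).2) r
        refine ⟨W, fun x hx => hWc x (reach_of_detour rfl h1 hx), hWw.trans ?_⟩
        have hmono : ∑ f ∈ F.erase s(u, v), w f ≤ ∑ f ∈ F, w f :=
          Finset.sum_le_sum_of_subset_of_nonneg (Finset.erase_subset _ _) (fun i _ _ => hw i)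
        linarith
      · by_cases h2 : reach G (F.erase s(u, v)) r u ∨ reach G (F.erase s(u, v)) r v
        · rcases h2 with h2 | h2
          · exact tour_step hw ih adj he hcard hFG h2 h1
          · have he' : s(v, u) ∈ F := by rwa [Sym2.eq_swap]
            have h2' : reach G (F.erase s(v, u)) r v := by rwa [Sym2.eq_swap]
            have h1' : ¬ reach G (F.erase s(v, u)) v u := by
              rw [Sym2.eq_swap]
              exact fun h => h1 h.symm
            have := tour_step hw ih adj.symm he' hcard hFG h2' h1'
            exact this
        · push_neg at h2
          obtain ⟨W, hWc, hWw⟩ := ih (F.erase s(u, v))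
            (by have := Finset.card_erase_of_mem he
                have := Finset.card_pos.mpr ⟨_, he⟩
                omega)
            (fun f hf => hFG f (Finset.mem_erase.mp hf).2) r
          refine ⟨W, fun x hx => hWc x (reach_erase_of_far rfl hx h2.1 h2.2), hWw.trans ?_⟩
          have hmono : ∑ f ∈ F.erase s(u, v), w f ≤ ∑ f ∈ F, w f :=
            Finset.sum_le_sum_of_subset_of_nonneg (Finset.erase_subset _ _) (fun i _ _ => hw i)
          linarith
end TourMain
section Dist
open SimpleGraph TMaux TMaux2

variable {V : Type*} (G : SimpleGraph V) (w : Sym2 V → ℝ)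

/-- min-weight walk distance -/
noncomputable def dW (x y : V) : ℝ := sInf {c | ∃ p : G.Walk x y, c = walkWeight w p}

variable {G} {w}

lemma dW_bddBelow (hw : ∀ e, 0 ≤ w e) (x y : V) :
    BddBelow {c | ∃ p : G.Walk x y, c = walkWeight w p} := by
  refine ⟨0, ?_⟩
  rintro c ⟨p, rfl⟩
  exact walkWeight_nonneg hw p

lemma dW_le (hw : ∀ e, 0 ≤ w e) {x y : V} (p : G.Walk x y) :
    dW G w x y ≤ walkWeight w p :=
  csInf_le (dW_bddBelow hw x y) ⟨p, rfl⟩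

lemma le_dW {x y : V} (h : G.Reachable x y) {B : ℝ}
    (hb : ∀ p : G.Walk x y, B ≤ walkWeight w p) : B ≤ dW G w x y := by
  refine le_csInf ?_ ?_
  · obtain ⟨p⟩ := h
    exact ⟨_, p, rfl⟩
  · rintro c ⟨p, rfl⟩
    exact hb p

lemma dW_nonneg (hw : ∀ e, 0 ≤ w e) (x y : V) : 0 ≤ dW G w x y := by
  by_cases h : G.Reachable x y
  · exact le_dW h (fun p => walkWeight_nonneg hw p)
  · have : {c | ∃ p : G.Walk x y, c = walkWeight w p} = ∅ := by
      rw [Set.eq_empty_iff_forall_notMem]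
      rintro c ⟨p, rfl⟩
      exact h ⟨p⟩
    rw [dW, this]
    simp [Real.sInf_empty]

lemma dW_triangle (hw : ∀ e, 0 ≤ w e) {x y z : V}
    (hxy : G.Reachable x y) (hyz : G.Reachable y z) :
    dW G w x z ≤ dW G w x y + dW G w y z := by
  have key : ∀ p : G.Walk x y, dW G w x z - dW G w y z ≤ walkWeight w p := by
    intro p
    have h2 : dW G w x z - walkWeight w p ≤ dW G w y z := by
      refine le_dW hyz (fun q => ?_)
      have := dW_le hw (p.append q)
      rw [walkWeight_append] at this
      linarith
    linarith
  have := le_dW hxy key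
  linarith

/-- cost of a chain of vertices -/
noncomputable def pathCost (G : SimpleGraph V) (w : Sym2 V → ℝ) : List V → ℝ
  | [] => 0
  | [_] => 0
  | x :: y :: l => dW G w x y + pathCost G w (y :: l)

lemma pathCost_cons_cons (x y : V) (l : List V) :
    pathCost G w (x :: y :: l) = dW G w x y + pathCost G w (y :: l) := rfl

end Dist
section Split
open SimpleGraph TMaux TMaux2

variable {V : Type*} [DecidableEq V] {G : SimpleGraph V} {w : Sym2 V → ℝ}

lemma split (hw : ∀ e, 0 ≤ w e) {a b : V} (W : G.Walk a b) :
    ∀ T' : Finset V, (∀ t ∈ T', t ∈ W.support) →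
    ∃ ts : List V, ts.Nodup ∧ ts.toFinset = insert a T' ∧ ts.head? = some a ∧
      List.Chain' G.Reachable (ts ++ [b]) ∧
      pathCost G w (ts ++ [b]) ≤ walkWeight w W := by
  induction W with
  | @nil a =>
    intro T' hT
    have hTa : ∀ t ∈ T', t = a := by
      intro t ht
      simpa using hT t ht
    refine ⟨[a], by simp, ?_, rfl, ?_, ?_⟩
    · ext x
      simp only [List.toFinset_cons, List.toFinset_nil, insert_empty_eq, Finset.mem_insert,
        Finset.mem_singleton]
      constructor
      · rintro rfl; exact Or.inl rfl
      · rintro (rfl | hx)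
        · rfl
        · exact hTa x hx
    · show List.Chain' G.Reachable [a, a]
      exact List.isChain_pair.mpr (Reachable.refl a)
    · show pathCost G w [a, a] ≤ walkWeight w (Walk.nil : G.Walk a a)
      have h1 : dW G w a a ≤ walkWeight w (Walk.nil : G.Walk a a) := dW_le hw _
      have h2 : pathCost G w [a, a] = dW G w a a + pathCost G w [a] := rfl
      have h3 : pathCost G w [a] = 0 := rfl
      rw [walkWeight_nil] at h1 ⊢
      linarith
  | @cons a a' b hadj q ih =>
    intro T' hT
    have hT' : ∀ t ∈ T'.erase a, t ∈ q.support := by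
      intro t ht
      obtain ⟨hne, htT⟩ := Finset.mem_erase.mp ht
      have := hT t htT
      rw [Walk.support_cons] at this
      rcases List.mem_cons.mp this with rfl | h
      · exact absurd rfl hne
      · exact h
    obtain ⟨ts', hnd', htf', hhd', hch', hpc'⟩ := ih (T'.erase a) hT'
    obtain ⟨rest, rfl⟩ : ∃ rest, ts' = a' :: rest := by
      cases ts' with
      | nil => simp at hhd'
      | cons hd tl =>
        have hhd : hd = a' := by simpa using hhd'
        exact ⟨tl, by rw [hhd]⟩
    have hwedge : dW G w a a' ≤ w s(a, a') := by
      have := dW_le hw (Walk.cons hadj Walk.nil)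
      rwa [walkWeight_cons, walkWeight_nil, add_zero] at this
    have hwcons : walkWeight w (Walk.cons hadj q) = w s(a, a') + walkWeight w q := by
      rw [walkWeight_cons]
    have hinsert : insert a (T'.erase a) = insert a T' := by
      ext x
      simp only [Finset.mem_insert, Finset.mem_erase]
      constructor
      · rintro (rfl | ⟨_, h⟩)
        · exact Or.inl rfl
        · exact Or.inr h
      · rintro (rfl | h)
        · exact Or.inl rfl
        · by_cases hx : x = a
          · exact Or.inl hx
          · exact Or.inr ⟨hx, h⟩
    by_cases haa : a = a'
    · subst haa
      refine ⟨a :: rest, hnd', by rw [htf', hinsert], rfl, hch', ?_⟩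
      have h0 : 0 ≤ w s(a, a) := hw _
      linarith [hpc']
    · have hanotin : a ∉ (a' :: rest) := by
        intro hmem
        have : a ∈ (a' :: rest).toFinset := List.mem_toFinset.mpr hmem
        rw [htf'] at this
        rcases Finset.mem_insert.mp this with h | h
        · exact haa h
        · exact (Finset.mem_erase.mp h).1 rfl
      by_cases ha'T : a' ∈ T'
      · refine ⟨a :: a' :: rest, List.nodup_cons.mpr ⟨hanotin, hnd'⟩, ?_, rfl, ?_, ?_⟩
        · rw [List.toFinset_cons, htf']
          ext x
          simp only [Finset.mem_insert, Finset.mem_erase]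
          constructor
          · rintro (rfl | rfl | ⟨_, h⟩)
            · exact Or.inl rfl
            · exact Or.inr ha'T
            · exact Or.inr h
          · rintro (rfl | h)
            · exact Or.inl rfl
            · by_cases hx : x = a'
              · exact Or.inr (Or.inl hx)
              · by_cases hxa : x = a
                · exact Or.inl hxa
                · exact Or.inr (Or.inr ⟨hxa, h⟩)
        · show List.Chain' G.Reachable (a :: a' :: (rest ++ [b]))
          rw [List.Chain', List.isChain_cons_cons]
          exact ⟨hadj.reachable, hch'⟩
        · show pathCost G w (a :: a' :: (rest ++ [b])) ≤ walkWeight w (Walk.cons hadj q)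
          rw [pathCost_cons_cons, hwcons]
          have hpc'' : pathCost G w (a' :: (rest ++ [b])) ≤ walkWeight w q := hpc'
          linarith
      · have ha'rest : a' ∉ rest := (List.nodup_cons.mp hnd').1
        have ha'T'e : a' ∉ T'.erase a := fun h => ha'T (Finset.mem_erase.mp h).2
        have h1 : insert a' rest.toFinset = insert a' (T'.erase a) := by
          rw [← List.toFinset_cons]; exact htf'
        have hrestf : rest.toFinset = T'.erase a := by
          ext x
          constructor
          · intro hx
            have hx2 : x ∈ insert a' (T'.erase a) := h1 ▸ Finset.mem_insert_of_mem hx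
            rcases Finset.mem_insert.mp hx2 with rfl | h
            · exact absurd (List.mem_toFinset.mp hx) ha'rest
            · exact h
          · intro hx
            have hx2 : x ∈ insert a' rest.toFinset := by
              rw [h1]; exact Finset.mem_insert_of_mem hx
            rcases Finset.mem_insert.mp hx2 with rfl | h
            · exact absurd hx ha'T'e
            · exact List.mem_toFinset.mp h |> List.mem_toFinset.mpr
        have hanotrest : a ∉ rest := fun h => hanotin (List.mem_cons_of_mem _ h)
        cases rest with
        | nil =>
          have hTe : T'.erase a = ∅ := by
            rw [← hrestf]
            simp
          have hiT : insert a T' = {a} := by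
            ext x
            simp only [Finset.mem_insert, Finset.mem_singleton]
            constructor
            · rintro (rfl | hx)
              · rfl
              · by_cases hxa : x = a
                · exact hxa
                · exact absurd (Finset.mem_erase.mpr ⟨hxa, hx⟩) (by rw [hTe]; simp)
            · rintro rfl; exact Or.inl rfl
          have hreach_a'b : G.Reachable a' b := by
            have : List.Chain' G.Reachable [a', b] := hch'
            exact List.isChain_pair.mp this
          have hpcab : pathCost G w ([a'] ++ [b]) = dW G w a' b := by
            show dW G w a' b + pathCost G w [b] = _
            have h3 : pathCost G w [b] = 0 := rfl
            rw [h3, add_zero]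
          refine ⟨[a], by simp, by rw [hiT]; simp, rfl, ?_, ?_⟩
          · show List.Chain' G.Reachable [a, b]
            exact List.isChain_pair.mpr (hadj.reachable.trans hreach_a'b)
          · show pathCost G w [a, b] ≤ walkWeight w (Walk.cons hadj q)
            have htri : dW G w a b ≤ dW G w a a' + dW G w a' b :=
              dW_triangle hw hadj.reachable hreach_a'b
            have h4 : pathCost G w [a, b] = dW G w a b + pathCost G w [b] := rfl
            have h3 : pathCost G w [b] = 0 := rfl
            rw [hpcab] at hpc'
            rw [hwcons, h4, h3]
            linarith
        | cons t₂ rest₂ =>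
          have hch'' : List.Chain' G.Reachable (a' :: t₂ :: (rest₂ ++ [b])) := hch'
          rw [List.Chain', List.isChain_cons_cons] at hch''
          have hreach_a't₂ : G.Reachable a' t₂ := hch''.1
          have hch2 : List.Chain' G.Reachable (t₂ :: (rest₂ ++ [b])) := hch''.2
          have hpc2 : pathCost G w (a' :: t₂ :: (rest₂ ++ [b]))
              = dW G w a' t₂ + pathCost G w (t₂ :: (rest₂ ++ [b])) := rfl
          refine ⟨a :: t₂ :: rest₂, ?_, ?_, rfl, ?_, ?_⟩
          · exact List.nodup_cons.mpr ⟨hanotrest, (List.nodup_cons.mp hnd').2⟩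
          · rw [List.toFinset_cons, hrestf, hinsert]
          · show List.Chain' G.Reachable (a :: t₂ :: (rest₂ ++ [b]))
            rw [List.Chain', List.isChain_cons_cons]
            exact ⟨hadj.reachable.trans hreach_a't₂, hch2⟩
          · show pathCost G w (a :: t₂ :: (rest₂ ++ [b])) ≤ walkWeight w (Walk.cons hadj q)
            rw [pathCost_cons_cons, hwcons]
            have htri : dW G w a t₂ ≤ dW G w a a' + dW G w a' t₂ :=
              dW_triangle hw hadj.reachable hreach_a't₂
            have hpc'' : pathCost G w (a' :: t₂ :: (rest₂ ++ [b])) ≤ walkWeight w q := hpc'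
            rw [hpc2] at hpc''
            linarith
end Split

section SmallLemmas
open SimpleGraph TMaux TMaux2

variable {V : Type*} [DecidableEq V] {G : SimpleGraph V} {w : Sym2 V → ℝ}

lemma changes_lemma (ρ : ℕ → ℕ) : ∀ m : ℕ,
    ((Finset.range (m + 1)).image ρ).card ≤
      ((Finset.range m).filter (fun n => ρ n ≠ ρ (n + 1))).card + 1 := by
  intro m
  induction m with
  | zero => simp
  | succ m ih =>
    have hsub : (Finset.range m).filter (fun n => ρ n ≠ ρ (n + 1)) ⊆
        (Finset.range (m + 1)).filter (fun n => ρ n ≠ ρ (n + 1)) :=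
      Finset.filter_subset_filter _ (Finset.range_subset_range.mpr (Nat.le_succ m))
    rw [Finset.range_add_one, Finset.image_insert]
    by_cases hρ : ρ m = ρ (m + 1)
    · have hmem : ρ (m + 1) ∈ (Finset.range (m + 1)).image ρ :=
        Finset.mem_image.mpr ⟨m, Finset.self_mem_range_succ m, hρ⟩
      rw [Finset.insert_eq_self.mpr hmem]
      exact ih.trans (by
        have := Finset.card_le_card hsub
        omega)
    · have hnew : m ∈ (Finset.range (m + 1)).filter (fun n => ρ n ≠ ρ (n + 1)) :=
        Finset.mem_filter.mpr ⟨Finset.self_mem_range_succ m, hρ⟩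
      have hnotold : m ∉ (Finset.range m).filter (fun n => ρ n ≠ ρ (n + 1)) := by
        simp
      have hins : insert m ((Finset.range m).filter (fun n => ρ n ≠ ρ (n + 1))) ⊆
          (Finset.range (m + 1)).filter (fun n => ρ n ≠ ρ (n + 1)) :=
        Finset.insert_subset hnew hsub
      have h2 := Finset.card_le_card hins
      rw [Finset.card_insert_of_notMem hnotold] at h2
      have h3 := Finset.card_insert_le (ρ (m + 1)) ((Finset.range (m + 1)).image ρ)
      omega

lemma pathCost_eq_sum (dflt : V) : ∀ l : List V,
    pathCost G w l = ∑ n ∈ Finset.range (l.length - 1),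
      dW G w (l.getD n dflt) (l.getD (n + 1) dflt)
  | [] => by simp [pathCost]
  | [x] => by simp [pathCost]
  | x :: y :: l => by
    rw [pathCost_cons_cons, pathCost_eq_sum dflt (y :: l)]
    have hlen : (x :: y :: l).length - 1 = ((y :: l).length - 1) + 1 := by simp
    rw [hlen, Finset.sum_range_succ']
    simp only [List.getD_cons_succ, List.getD_cons_zero]
    ring

lemma list_toFinset_sum_le (hw : ∀ e, 0 ≤ w e) : ∀ l : List (Sym2 V),
    ∑ e ∈ l.toFinset, w e ≤ (l.map w).sum := by
  intro l
  induction l with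
  | nil => simp
  | cons e l ih =>
    rw [List.toFinset_cons, List.map_cons, List.sum_cons]
    by_cases he : e ∈ l.toFinset
    · rw [Finset.insert_eq_self.mpr he]
      linarith [hw e]
    · rw [Finset.sum_insert he]
      linarith
end SmallLemmas

section SubW
open SimpleGraph TMaux TMaux2
set_option linter.unusedSectionVars false

variable {V : Type*} [Fintype V] [DecidableEq V] {G : SimpleGraph V} {w : Sym2 V → ℝ}

lemma subgraphWeight_nonneg (hw : ∀ e, 0 ≤ w e) (S : G.Subgraph) :
    0 ≤ subgraphWeight w S :=
  Finset.sum_nonneg fun e _ => hw e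

lemma subgraphWeight_sup_le (hw : ∀ e, 0 ≤ w e) (S₁ S₂ : G.Subgraph) :
    subgraphWeight w (S₁ ⊔ S₂) ≤ subgraphWeight w S₁ + subgraphWeight w S₂ := by
  unfold subgraphWeight
  have hset : Finset.univ.filter (fun e : Sym2 V => e ∈ (S₁ ⊔ S₂).edgeSet) =
      (Finset.univ.filter (fun e : Sym2 V => e ∈ S₁.edgeSet)) ∪
      (Finset.univ.filter (fun e : Sym2 V => e ∈ S₂.edgeSet)) := by
    ext e
    simp only [Finset.mem_filter, Finset.mem_union, Finset.mem_univ, true_and,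
      SimpleGraph.Subgraph.edgeSet_sup, Set.mem_union]
  rw [hset]
  set A := Finset.univ.filter (fun e : Sym2 V => e ∈ S₁.edgeSet)
  set B := Finset.univ.filter (fun e : Sym2 V => e ∈ S₂.edgeSet)
  have key : (∑ e ∈ A ∪ B, w e) + ∑ e ∈ A ∩ B, w e = (∑ e ∈ A, w e) + ∑ e ∈ B, w e :=
    Finset.sum_union_inter
  have hnn : 0 ≤ ∑ e ∈ A ∩ B, w e := Finset.sum_nonneg fun e _ => hw e
  linarith

lemma subgraphWeight_toSubgraph_le (hw : ∀ e, 0 ≤ w e) {x y : V} (q : G.Walk x y) :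
    subgraphWeight w q.toSubgraph ≤ walkWeight w q := by
  unfold subgraphWeight walkWeight
  have hset : Finset.univ.filter (fun e : Sym2 V => e ∈ q.toSubgraph.edgeSet) =
      q.edges.toFinset := by
    ext e
    simp [SimpleGraph.Walk.edgeSet_toSubgraph]
  rw [hset]
  exact list_toFinset_sum_le hw q.edges
end SubW


section Main
open SimpleGraph TMaux TMaux2

/-- Takahashi–Matsuyama guarantee: in a graph with nonnegative edge
weights and k ≥ 2 terminals, the greedy procedure that starts from a terminal and
repeatedly attaches a nearest uncovered terminal to the current tree via a
minimum-weight path produces, once all terminals are covered, a tree of weight at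
most (2 − 2/k) times the weight of a minimum-weight connected subgraph spanning
the terminals. -/
theorem stmt_13 {V : Type*} [Fintype V] [DecidableEq V] (G : SimpleGraph V)
    (w : Sym2 V → ℝ) (hw : ∀ e, 0 ≤ w e)
    (terminals : Finset V) (hk : 2 ≤ terminals.card)
    (t₀ : V) (ht₀ : t₀ ∈ terminals)
    (H : ℕ → G.Subgraph)
    (h0 : H 0 = SimpleGraph.singletonSubgraph G t₀)
    (K : ℕ)
    (hstep : ∀ k < K, ∃ (d v : V) (p : G.Walk d v),
        d ∈ terminals ∧ d ∉ (H k).verts ∧ v ∈ (H k).verts ∧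
        (∀ (d' v' : V) (p' : G.Walk d' v'),
          d' ∈ terminals → d' ∉ (H k).verts → v' ∈ (H k).verts →
          walkWeight w p ≤ walkWeight w p') ∧
        H (k + 1) = H k ⊔ p.toSubgraph)
    (hterm : ↑terminals ⊆ (H K).verts)
    (opt : ℝ)
    (hopt : IsLeast {c : ℝ | ∃ S : G.Subgraph, S.Connected ∧ ↑terminals ⊆ S.verts ∧
        c = subgraphWeight w S} opt) :
    subgraphWeight w (H K) ≤ (2 - 2 / terminals.card) * opt := by
  classical
  set k := terminals.card with hk_def
  have hkpos : 0 < k := by omega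
  -- optimal witness
  obtain ⟨⟨S, hScon, hSsub, hSw⟩, -⟩ := hopt
  have hopt0 : 0 ≤ opt := hSw ▸ subgraphWeight_nonneg hw S
  set F : Finset (Sym2 V) := Finset.univ.filter (fun e : Sym2 V => e ∈ S.edgeSet) with hF_def
  have hFsum : ∑ e ∈ F, w e = opt := hSw.symm
  have hFG : ∀ e ∈ F, e ∈ G.edgeSet := fun e he => S.edgeSet_subset (Finset.mem_filter.mp he).2
  -- terminals are reachable from t₀ using only edges of S
  have hcoe : ∀ (x y : S.verts) (p : S.coe.Walk x y), reach G F x.1 y.1 := by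
    intro x y p
    induction p with
    | nil => exact reach.refl _ _
    | @cons a b cc h q ih =>
      have hadj : S.Adj a.1 b.1 := h
      exact reach_step (S.adj_sub hadj)
        (Finset.mem_filter.mpr ⟨Finset.mem_univ _, (SimpleGraph.Subgraph.mem_edgeSet).mpr hadj⟩) ih
  have hreachF : ∀ t ∈ terminals, reach G F t₀ t := by
    intro t ht
    have h1 : t₀ ∈ S.verts := hSsub (Finset.mem_coe.mpr ht₀)
    have h2 : t ∈ S.verts := hSsub (Finset.mem_coe.mpr ht)
    obtain ⟨p⟩ := hScon.preconnected ⟨t₀, h1⟩ ⟨t, h2⟩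
    exact hcoe _ _ p
  -- tour
  obtain ⟨W, hWc, hWw⟩ := tour (G := G) hw F.card F le_rfl hFG t₀
  have hWw' : walkWeight w W ≤ 2 * opt := by rw [hFsum] at hWw; exact hWw
  -- split the tour at the terminals
  obtain ⟨ts, hnd, htf, hhd, hch, hpc⟩ := split hw W terminals (fun t ht => hWc t (hreachF t ht))
  have htf' : ts.toFinset = terminals := by rw [htf]; exact Finset.insert_eq_self.mpr ht₀
  have hlen : ts.length = k := by rw [← List.toFinset_card_of_nodup hnd, htf']
  set f : ℕ → V := fun n => ts.getD (n % k) t₀ with hf_def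
  set c : ℕ → ℝ := fun n => dW G w (f n) (f (n + 1)) with hc_def
  have hmodlt : ∀ n : ℕ, n % k < k := fun n => Nat.mod_lt n hkpos
  have hlenl : (ts ++ [t₀]).length = k + 1 := by simp [hlen]
  have hts0 : ts.getD 0 t₀ = t₀ := by
    cases ts with
    | nil => simp at hhd
    | cons hd tl =>
      have : hd = t₀ := by simpa using hhd
      simp [this]
  have hgetl : ∀ n, n < k → (ts ++ [t₀]).getD n t₀ = f n := by
    intro n hn
    rw [List.getD_append _ _ _ _ (by rw [hlen]; exact hn)]
    show ts.getD n t₀ = ts.getD (n % k) t₀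
    rw [Nat.mod_eq_of_lt hn]
  have hgetk : (ts ++ [t₀]).getD k t₀ = t₀ := by
    rw [List.getD_append_right _ _ _ _ (by rw [hlen])]
    simp [hlen]
  have hfk0 : f k = t₀ := by
    show ts.getD (k % k) t₀ = t₀
    rw [Nat.mod_self]
    exact hts0
  have hget1 : ∀ n, n < k → (ts ++ [t₀]).getD (n + 1) t₀ = f (n + 1) := by
    intro n hn
    rcases Nat.lt_or_ge (n + 1) k with h | h
    · exact hgetl _ h
    · have hnk : n + 1 = k := by omega
      rw [hnk, hgetk, hfk0]
  have hcyc_sum : ∑ n ∈ Finset.range k, c n = pathCost G w (ts ++ [t₀]) := by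
    rw [pathCost_eq_sum t₀, hlenl]
    simp only [Nat.add_sub_cancel]
    refine Finset.sum_congr rfl (fun n hn => ?_)
    have hnk : n < k := Finset.mem_range.mp hn
    rw [hgetl n hnk, hget1 n hnk]
  have hcyc : ∑ n ∈ Finset.range k, c n ≤ 2 * opt := by
    rw [hcyc_sum]; exact hpc.trans hWw'
  -- cyclically consecutive vertices are reachable from one another
  have hchain := List.isChain_iff_getElem.mp hch
  have hreach_cyc : ∀ n : ℕ, G.Reachable (f n) (f (n + 1)) := by
    intro n
    have hm : n % k < k := hmodlt n
    have hb : n % k < (ts ++ [t₀]).length - 1 := by rw [hlenl]; omega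
    have hR := hchain (n % k) (by omega)
    rw [← List.getD_eq_getElem _ t₀, ← List.getD_eq_getElem _ t₀] at hR
    have h1 : f n = (ts ++ [t₀]).getD (n % k) t₀ := by
      rw [hgetl _ hm]
      show ts.getD (n % k) t₀ = ts.getD (n % k % k) t₀
      rw [Nat.mod_mod_of_dvd n (dvd_refl k)]
    have h2 : f (n + 1) = (ts ++ [t₀]).getD (n % k + 1) t₀ := by
      have hmod : (n + 1) % k = (n % k + 1) % k := by
        rw [Nat.add_mod n 1 k, Nat.add_mod (n % k) 1 k, Nat.mod_mod_of_dvd n (dvd_refl k)]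
      rcases Nat.lt_or_ge (n % k + 1) k with h | h
      · rw [hgetl _ h]
        show ts.getD ((n+1) % k) t₀ = ts.getD ((n % k + 1) % k) t₀
        rw [hmod]
      · have hnk : n % k + 1 = k := by omega
        rw [hnk, hgetk]
        show ts.getD ((n+1) % k) t₀ = t₀
        rw [hmod, hnk, Nat.mod_self]
        exact hts0
    rw [h1, h2]
    exact hR
  -- periodicity
  have hfper : ∀ n : ℕ, f (n + k) = f n := by
    intro n
    show ts.getD ((n + k) % k) t₀ = ts.getD (n % k) t₀
    rw [Nat.add_mod_right]
  have hcper : ∀ n : ℕ, c (n + k) = c n := by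
    intro n
    show dW G w (f (n + k)) (f (n + k + 1)) = dW G w (f n) (f (n + 1))
    rw [hfper n, show n + k + 1 = (n + 1) + k by omega, hfper (n + 1)]
  -- pick the heaviest cyclic segment
  obtain ⟨istar, histar, hmax⟩ := Finset.exists_max_image (Finset.range k) c
    ⟨0, Finset.mem_range.mpr hkpos⟩
  have histark : istar < k := Finset.mem_range.mp histar
  have hsum_rot : ∑ n ∈ Finset.range (k - 1), c (istar + 1 + n)
      = (∑ n ∈ Finset.range k, c n) - c istar := by
    have h1 : ∑ n ∈ Finset.range (k - 1), c (istar + 1 + n)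
        = ∑ m ∈ Finset.Ico (istar + 1) (istar + k), c m := by
      rw [Finset.sum_Ico_eq_sum_range]
      have he : istar + k - (istar + 1) = k - 1 := by omega
      rw [he]
    have h2 : ∑ m ∈ Finset.Ico (istar + 1) (istar + k), c m
        = (∑ m ∈ Finset.Ico (istar + 1) k, c m) + ∑ m ∈ Finset.Ico k (istar + k), c m :=
      (Finset.sum_Ico_consecutive _ (by omega) (by omega)).symm
    have h3 : ∑ m ∈ Finset.Ico k (istar + k), c m = ∑ m ∈ Finset.range istar, c m := by
      rw [Finset.sum_Ico_eq_sum_range]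
      have he : istar + k - k = istar := by omega
      rw [he]
      refine Finset.sum_congr rfl (fun n _ => ?_)
      rw [add_comm k n]
      exact hcper n
    have h4 : ∑ n ∈ Finset.range k, c n
        = (∑ m ∈ Finset.range istar, c m) + (c istar + ∑ m ∈ Finset.Ico (istar + 1) k, c m) := by
      have q1 : (∑ m ∈ Finset.Ico 0 istar, c m) + ∑ m ∈ Finset.Ico istar k, c m
          = ∑ m ∈ Finset.Ico 0 k, c m :=
        Finset.sum_Ico_consecutive c (Nat.zero_le _) (by omega)
      have q2 : ∑ m ∈ Finset.Ico istar k, c m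
          = c istar + ∑ m ∈ Finset.Ico (istar + 1) k, c m :=
        Finset.sum_eq_sum_Ico_succ_bot histark c
      rw [Finset.range_eq_Ico, ← q1, q2, ← Finset.range_eq_Ico]
    rw [h1, h2, h3, h4]
    ring
  have hkR : (2 : ℝ) ≤ (k : ℝ) := by exact_mod_cast hk
  have hkRpos : (0 : ℝ) < (k : ℝ) := by linarith
  have hciavg : (∑ n ∈ Finset.range k, c n) ≤ (k : ℝ) * c istar := by
    have := Finset.sum_le_card_nsmul (Finset.range k) c (c istar) (fun n hn => hmax n hn)
    rwa [Finset.card_range, nsmul_eq_mul] at this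
  have hrot_le : ∑ n ∈ Finset.range (k - 1), c (istar + 1 + n) ≤ (2 - 2 / (k : ℝ)) * opt := by
    rw [hsum_rot]
    set Sc := ∑ n ∈ Finset.range k, c n
    have h5 : Sc / (k : ℝ) ≤ c istar := by
      rw [div_le_iff₀ hkRpos]
      linarith [hciavg]
    have h6 : Sc - c istar ≤ Sc * (1 - 1 / (k : ℝ)) := by
      have he : Sc * (1 - 1 / (k : ℝ)) = Sc - Sc / (k : ℝ) := by
        field_simp
      rw [he]
      linarith
    have h7 : Sc * (1 - 1 / (k : ℝ)) ≤ (2 * opt) * (1 - 1 / (k : ℝ)) := by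
      apply mul_le_mul_of_nonneg_right hcyc
      have : 1 / (k : ℝ) ≤ 1 := by
        rw [div_le_one hkRpos]; linarith
      linarith
    have h8 : (2 * opt) * (1 - 1 / (k : ℝ)) = (2 - 2 / (k : ℝ)) * opt := by ring
    linarith
  -- the rotated enumeration of the terminals
  set g : ℕ → V := fun n => f (istar + 1 + n) with hg_def
  have hgmem : ∀ n : ℕ, g n ∈ terminals := by
    intro n
    have h1 : ts.getD ((istar + 1 + n) % k) t₀ ∈ ts := by
      rw [List.getD_eq_getElem _ t₀ (by rw [hlen]; exact hmodlt _)]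
      exact List.getElem_mem _
    rw [← htf']
    exact List.mem_toFinset.mpr h1
  have hgsurj : ∀ t ∈ terminals, ∃ n, n < k ∧ g n = t := by
    intro t ht
    have htts : t ∈ ts := List.mem_toFinset.mp (by rw [htf']; exact ht)
    obtain ⟨⟨m, hm⟩, hget⟩ := List.mem_iff_get.mp htts
    have hmk : m < k := by rw [← hlen]; exact hm
    refine ⟨(m + k - (istar + 1)) % k, Nat.mod_lt _ hkpos, ?_⟩
    show f (istar + 1 + (m + k - (istar + 1)) % k) = t
    have heq : (istar + 1 + (m + k - (istar + 1)) % k) % k = m := by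
      have h1 : (istar + 1 + (m + k - (istar + 1)) % k) % k
          = (istar + 1 + (m + k - (istar + 1))) % k :=
        Nat.ModEq.add_left (istar + 1) (Nat.mod_modEq (m + k - (istar + 1)) k)
      have h2 : istar + 1 + (m + k - (istar + 1)) = m + k := by omega
      rw [h1, h2, Nat.add_mod_right, Nat.mod_eq_of_lt hmk]
    show ts.getD ((istar + 1 + (m + k - (istar + 1)) % k) % k) t₀ = t
    rw [heq, List.getD_eq_getElem _ t₀ hm]
    exact hget
  have hreach_g : ∀ n : ℕ, G.Reachable (g n) (g (n + 1)) := fun n => hreach_cyc (istar + 1 + n)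
  -- greedy data
  have hstep' := fun i : Fin K => hstep i.1 i.2
  choose dd vv pp hdt hdnot hdv hmin hHrec using hstep'
  -- monotonicity of the vertex sets
  have hstepverts : ∀ i : Fin K, (H i.1).verts ⊆ (H (i.1 + 1)).verts := by
    intro i
    rw [hHrec i, SimpleGraph.Subgraph.verts_sup]
    exact Set.subset_union_left
  have hmono : ∀ j, j ≤ K → ∀ i, i ≤ j → (H i).verts ⊆ (H j).verts := by
    intro j
    induction j with
    | zero =>
      intro _ i hi
      have : i = 0 := by omega
      rw [this]
    | succ j ihj =>
      intro hjK i hij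
      rcases Nat.eq_or_lt_of_le hij with rfl | hlt
      · exact Set.Subset.rfl
      · exact (ihj (by omega) i (by omega)).trans (hstepverts ⟨j, by omega⟩)
  -- first-coverage times
  set τ : V → ℕ := fun x => sInf {i | x ∈ (H i).verts} with hτ_def
  have hmemK : ∀ x ∈ terminals, x ∈ (H K).verts := fun x hx => hterm (Finset.mem_coe.mpr hx)
  have hτmem : ∀ x ∈ terminals, x ∈ (H (τ x)).verts := by
    intro x hx
    have h1 : τ x ∈ {i | x ∈ (H i).verts} := Nat.sInf_mem ⟨K, hmemK x hx⟩
    exact h1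
  have hcov : ∀ x ∈ terminals, ∀ i, i ≤ K → (x ∈ (H i).verts ↔ τ x ≤ i) := by
    intro x hx i hiK
    constructor
    · exact fun h => Nat.sInf_le h
    · exact fun h => hmono i hiK (τ x) h (hτmem x hx)
  have hτ0 : τ t₀ = 0 := by
    have h1 : t₀ ∈ (H 0).verts := by
      rw [h0, SimpleGraph.singletonSubgraph_verts]
      exact rfl
    exact Nat.le_zero.mp (Nat.sInf_le h1)
  have hτd : ∀ i : Fin K, τ (dd i) = i.1 + 1 := by
    intro i
    have hle : τ (dd i) ≤ i.1 + 1 := by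
      apply Nat.sInf_le
      show dd i ∈ (H (i.1 + 1)).verts
      rw [hHrec i, SimpleGraph.Subgraph.verts_sup]
      exact Or.inr ((pp i).start_mem_verts_toSubgraph)
    have hgt : ¬ τ (dd i) ≤ i.1 := fun h =>
      hdnot i ((hcov _ (hdt i) i.1 (le_of_lt i.2)).mpr h)
    omega
  -- Hall's condition for the crossing-edge system
  set tset : Fin K → Finset ℕ := fun i => (Finset.range (k - 1)).filter
    (fun n => (τ (g n) ≤ i.1 ∧ i.1 < τ (g (n + 1))) ∨
      (τ (g (n + 1)) ≤ i.1 ∧ i.1 < τ (g n))) with htset_def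
  have hall : ∀ s : Finset (Fin K), s.card ≤ (s.biUnion tset).card := by
    intro s
    set ρ : ℕ → ℕ := fun n => (s.filter (fun i => i.1 < τ (g n))).card with hρ_def
    have hchsub : (Finset.range (k - 1)).filter (fun n => ρ n ≠ ρ (n + 1)) ⊆ s.biUnion tset := by
      intro n hn
      obtain ⟨hnr, hne⟩ := Finset.mem_filter.mp hn
      by_cases hBA : s.filter (fun i => i.1 < τ (g (n + 1))) ⊆ s.filter (fun i => i.1 < τ (g n))
      · have hssub : s.filter (fun i => i.1 < τ (g (n + 1)))
            ⊂ s.filter (fun i => i.1 < τ (g n)) := by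
          refine ⟨hBA, fun h => hne ?_⟩
          have := Finset.Subset.antisymm hBA h
          show (s.filter (fun i => i.1 < τ (g n))).card
            = (s.filter (fun i => i.1 < τ (g (n + 1)))).card
          rw [this]
        obtain ⟨i, hiA, hiB⟩ := Finset.exists_of_ssubset hssub
        obtain ⟨his, hilt⟩ := Finset.mem_filter.mp hiA
        have hige : τ (g (n + 1)) ≤ i.1 := by
          by_contra hcon
          exact hiB (Finset.mem_filter.mpr ⟨his, by omega⟩)
        exact Finset.mem_biUnion.mpr ⟨i, his,
          Finset.mem_filter.mpr ⟨hnr, Or.inr ⟨hige, hilt⟩⟩⟩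
      · obtain ⟨i, hiB, hiA⟩ := Finset.not_subset.mp hBA
        obtain ⟨his, hilt⟩ := Finset.mem_filter.mp hiB
        have hige : τ (g n) ≤ i.1 := by
          by_contra hcon
          exact hiA (Finset.mem_filter.mpr ⟨his, by omega⟩)
        exact Finset.mem_biUnion.mpr ⟨i, his,
          Finset.mem_filter.mpr ⟨hnr, Or.inl ⟨hige, hilt⟩⟩⟩
    set σfn : Fin K → ℕ := fun i => (s.filter (fun i' => i'.1 ≤ i.1)).card with hσ_def
    have himg : insert 0 (s.image σfn) ⊆ (Finset.range k).image ρ := by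
      intro val hval
      rcases Finset.mem_insert.mp hval with rfl | hval
      · obtain ⟨n, hnk, hgn⟩ := hgsurj t₀ ht₀
        refine Finset.mem_image.mpr ⟨n, Finset.mem_range.mpr hnk, ?_⟩
        show (s.filter (fun i => i.1 < τ (g n))).card = 0
        rw [hgn, hτ0]
        simp
      · obtain ⟨i, his, rfl⟩ := Finset.mem_image.mp hval
        obtain ⟨n, hnk, hgn⟩ := hgsurj (dd i) (hdt i)
        refine Finset.mem_image.mpr ⟨n, Finset.mem_range.mpr hnk, ?_⟩
        show (s.filter (fun i' => i'.1 < τ (g n))).card = (s.filter (fun i' => i'.1 ≤ i.1)).card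
        rw [hgn, hτd i]
        congr 1
        apply Finset.filter_congr
        intro i' _
        simp [Nat.lt_succ_iff]
    have h0notin : 0 ∉ s.image σfn := by
      intro h
      obtain ⟨i, his, hσi⟩ := Finset.mem_image.mp h
      have hmem : i ∈ s.filter (fun i' => i'.1 ≤ i.1) :=
        Finset.mem_filter.mpr ⟨his, le_refl _⟩
      have hpos := Finset.card_pos.mpr ⟨i, hmem⟩
      simp only [hσ_def] at hσi
      omega
    have hinj : Set.InjOn σfn s := by
      have key : ∀ a b : Fin K, a ∈ s → b ∈ s → a.1 < b.1 → σfn a < σfn b := by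
        intro a b has hbs hab
        apply Finset.card_lt_card
        refine ⟨Finset.filter_subset_filter _ (fun i' hi' => hi') |>.trans ?_, ?_⟩
        · intro i' hi'
          obtain ⟨hi's, hi'le⟩ := Finset.mem_filter.mp hi'
          exact Finset.mem_filter.mpr ⟨hi's, by omega⟩
        · intro hsub
          have := hsub (Finset.mem_filter.mpr ⟨hbs, le_refl b.1⟩)
          have := (Finset.mem_filter.mp this).2
          omega
      intro i his j hjs hij
      by_contra hne
      rcases Nat.lt_trichotomy i.1 j.1 with h | h | h
      · exact absurd hij (ne_of_lt (key i j his hjs h))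
      · exact hne (Fin.ext h)
      · exact absurd hij.symm (ne_of_lt (key j i hjs his h))
    have hcards : (insert 0 (s.image σfn)).card = s.card + 1 := by
      rw [Finset.card_insert_of_notMem h0notin, Finset.card_image_of_injOn hinj]
    have hcard1 : s.card + 1 ≤ ((Finset.range k).image ρ).card := by
      rw [← hcards]
      exact Finset.card_le_card himg
    have hch2 := changes_lemma ρ (k - 1)
    have hk1' : k - 1 + 1 = k := by omega
    rw [hk1'] at hch2
    have hbigc := Finset.card_le_card hchsub
    omega
  obtain ⟨φ, hφinj, hφmem⟩ := (Finset.all_card_le_biUnion_card_iff_exists_injective tset).mp hall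
  -- each greedy step is bounded by its assigned segment
  have hgw : ∀ i : Fin K, walkWeight w (pp i) ≤ c (istar + 1 + φ i) := by
    intro i
    obtain ⟨hrange, hcross⟩ := Finset.mem_filter.mp (hφmem i)
    have hr : G.Reachable (g (φ i)) (g (φ i + 1)) := hreach_g (φ i)
    show walkWeight w (pp i) ≤ dW G w (g (φ i)) (g (φ i + 1))
    rcases hcross with ⟨hcovd, hunc⟩ | ⟨hcovd, hunc⟩
    · have hcv : g (φ i) ∈ (H i.1).verts := (hcov _ (hgmem _) i.1 (le_of_lt i.2)).mpr hcovd
      have hun : g (φ i + 1) ∉ (H i.1).verts := fun h => by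
        have := (hcov _ (hgmem _) i.1 (le_of_lt i.2)).mp h
        omega
      refine le_dW hr (fun q => ?_)
      have := hmin i (g (φ i + 1)) (g (φ i)) q.reverse (hgmem _) hun hcv
      rwa [walkWeight_reverse] at this
    · have hcv : g (φ i + 1) ∈ (H i.1).verts := (hcov _ (hgmem _) i.1 (le_of_lt i.2)).mpr hcovd
      have hun : g (φ i) ∉ (H i.1).verts := fun h => by
        have := (hcov _ (hgmem _) i.1 (le_of_lt i.2)).mp h
        omega
      exact le_dW hr (fun q => hmin i (g (φ i)) (g (φ i + 1)) q (hgmem _) hun hcv)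
  -- total greedy cost is at most the rotated-segment sum
  have hsum_gw : ∑ i : Fin K, walkWeight w (pp i)
      ≤ ∑ n ∈ Finset.range (k - 1), c (istar + 1 + n) := by
    have h1 : ∑ i : Fin K, walkWeight w (pp i) ≤ ∑ i : Fin K, c (istar + 1 + φ i) :=
      Finset.sum_le_sum (fun i _ => hgw i)
    have h2 : ∑ n ∈ Finset.univ.image φ, c (istar + 1 + n)
        = ∑ i : Fin K, c (istar + 1 + φ i) :=
      Finset.sum_image (fun x _ y _ h => hφinj h)
    have h3 : Finset.univ.image φ ⊆ Finset.range (k - 1) := by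
      intro n hn
      obtain ⟨i, -, rfl⟩ := Finset.mem_image.mp hn
      exact (Finset.mem_filter.mp (hφmem i)).1
    have h4 : ∑ n ∈ Finset.univ.image φ, c (istar + 1 + n)
        ≤ ∑ n ∈ Finset.range (k - 1), c (istar + 1 + n) :=
      Finset.sum_le_sum_of_subset_of_nonneg h3 (fun n _ _ => dW_nonneg hw _ _)
    linarith [h1, h2, h4]
  -- the greedy tree's weight is at most the total greedy cost
  have hsubw : ∀ j, j ≤ K → subgraphWeight w (H j)
      ≤ ∑ i ∈ Finset.univ.filter (fun i : Fin K => i.1 < j), walkWeight w (pp i) := by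
    intro j
    induction j with
    | zero =>
      intro _
      have hz : subgraphWeight w (H 0) = 0 := by
        rw [h0]
        unfold subgraphWeight
        have : Finset.univ.filter
            (fun e : Sym2 V => e ∈ (SimpleGraph.singletonSubgraph G t₀).edgeSet) = ∅ := by
          ext e
          simp [SimpleGraph.edgeSet_singletonSubgraph]
        rw [this, Finset.sum_empty]
      rw [hz]
      exact Finset.sum_nonneg (fun i _ => walkWeight_nonneg hw _)
    | succ j ihj =>
      intro hjK
      have hjK' : j < K := by omega
      have hfs : Finset.univ.filter (fun i : Fin K => i.1 < j + 1)
          = insert ⟨j, hjK'⟩ (Finset.univ.filter (fun i : Fin K => i.1 < j)) := by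
        ext i
        simp only [Finset.mem_filter, Finset.mem_univ, true_and, Finset.mem_insert]
        constructor
        · intro h
          rcases Nat.lt_or_ge i.1 j with h' | h'
          · exact Or.inr h'
          · exact Or.inl (Fin.ext (show i.1 = j by omega))
        · rintro (rfl | h)
          · exact Nat.lt_succ_self j
          · omega
      have hnotmem : (⟨j, hjK'⟩ : Fin K) ∉ Finset.univ.filter (fun i : Fin K => i.1 < j) := by
        simp
      calc subgraphWeight w (H (j + 1))
          = subgraphWeight w (H j ⊔ (pp ⟨j, hjK'⟩).toSubgraph) := by rw [hHrec ⟨j, hjK'⟩]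
        _ ≤ subgraphWeight w (H j) + subgraphWeight w ((pp ⟨j, hjK'⟩).toSubgraph) :=
            subgraphWeight_sup_le hw _ _
        _ ≤ (∑ i ∈ Finset.univ.filter (fun i : Fin K => i.1 < j), walkWeight w (pp i))
              + walkWeight w (pp ⟨j, hjK'⟩) :=
            add_le_add (ihj (by omega)) (subgraphWeight_toSubgraph_le hw _)
        _ = ∑ i ∈ Finset.univ.filter (fun i : Fin K => i.1 < j + 1), walkWeight w (pp i) := by
            rw [hfs, Finset.sum_insert hnotmem]
            ring
  have hfinal1 : subgraphWeight w (H K) ≤ ∑ i : Fin K, walkWeight w (pp i) := by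
    have h1 := hsubw K le_rfl
    have hfilter : Finset.univ.filter (fun i : Fin K => i.1 < K) = Finset.univ := by
      ext i
      simp [i.2]
    rwa [hfilter] at h1
  linarith
end Main
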